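/- For w with w² = s(s+8)(4s+5) and s(4s+5)(s+2) ≠ 0, the functions q = 1/2 + s(2s³+6s²-63s-350)/(30w(s+2)) and t = 1/2 + (s+8)(2s⁴-8s³-42s²-170s-25)/(54w(4s+5)) satisfy 4t(1-t) = -4(s-1)⁵(s+5)³(s-10)/(729·s·(4s+5)³). -/

import Mathlib

/-- On the elliptic curve `w² = s(s+8)(4s+5)` with `s(4s+5)(s+2) ≠ 0`, the functions
`q = 1/2 + s(2s³+6s²-63s-350)/(30w(s+2))` and
`t = 1/2 + (s+8)(2s⁴-8s³-42s²-170s-25)/(54w(4s+5))`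
satisfy `4t(1-t) = -4(s-1)⁵(s+5)³(s-10)/(729·s·(4s+5)³)`. -/
theorem stmt_13 (s w q t : ℂ)
    (hw : w ^ 2 = s * (s + 8) * (4 * s + 5))
    (hs : s * (4 * s + 5) * (s + 2) ≠ 0)
    (hq : q = 1 / 2 + s * (2 * s ^ 3 + 6 * s ^ 2 - 63 * s - 350) / (30 * w * (s + 2)))
    (ht : t = 1 / 2 +
      (s + 8) * (2 * s ^ 4 - 8 * s ^ 3 - 42 * s ^ 2 - 170 * s - 25) / (54 * w * (4 * s + 5))) :
    4 * t * (1 - t) =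
      -(4 * (s - 1) ^ 5 * (s + 5) ^ 3 * (s - 10)) / (729 * s * (4 * s + 5) ^ 3) := by
  have hs0 : s ≠ 0 := fun h => hs (by rw [h]; ring)
  have hs1 : (4 * s + 5) ≠ 0 := fun h => by
    apply hs; rw [show s * (4 * s + 5) * (s + 2) = (4 * s + 5) * (s * (s + 2)) by ring, h]; ring
  by_cases hw0 : w = 0
  · have h8 : s + 8 = 0 := by
      have h : s * (s + 8) * (4 * s + 5) = 0 := by rw [← hw, hw0]; ring
      rcases mul_eq_zero.mp h with h' | h'
      · rcases mul_eq_zero.mp h' with h'' | h''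
        · exact absurd h'' hs0
        · exact h''
      · exact absurd h' hs1
    have hs8 : s = -8 := by linear_combination h8
    subst hs8
    rw [ht, hw0]
    norm_num
  · rw [ht]
    have h54 : (54 : ℂ) * w * (4 * s + 5) ≠ 0 := by
      simp [hw0, hs1]
    field_simp
    linear_combination (14580000 + 200110500*s + 747954000*s^2 + 432851040*s^3 + 145076832*s^4 + 12597120*s^5 - 2449440*s^6 - 1049760*s^7 + 11664*s^9 : ℂ) * hw
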